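/- In a full-information protocol in the crash-failure model with at most t failures, for all processes i and j and every run r: process i knows ∃v at time t+1 in r if and only if process j knows ∃v at time t+1 in r. -/
import Mathlib


attribute [local instance] Classical.propDecidable

/-- An adversary in the synchronous crash-failure model: an input vector of binary
initial values, a failure pattern given by the delivery relation `F` (`F m j i` means
the message sent by `j` at time `m` is delivered to `i` at time `m+1`, i.e. in round `m+1`),
and a crash round for each process (`⊤` meaning the process never crashes).
A process behaves correctly before its crashing round and sends nothing afterwards;
during its crashing round it may send to an arbitrary subset. -/
structure Adversary (n : ℕ) where
  init : Fin n → Bool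
  F : ℕ → Fin n → Fin n → Prop
  crash : Fin n → ℕ∞
  crash_pos : ∀ j, 1 ≤ crash j
  before_crash : ∀ (m : ℕ) (j i : Fin n), ((m + 1 : ℕ) : ℕ∞) < crash j → F m j i
  after_crash : ∀ (m : ℕ) (j i : Fin n), crash j < ((m + 1 : ℕ) : ℕ∞) → ¬ F m j i

namespace Adversary

variable {n : ℕ}

/-- A process is faulty if it crashes at some point. -/
def Faulty (A : Adversary n) (j : Fin n) : Prop := A.crash j ≠ ⊤

/-- The number `f` of actual failures in the run determined by the adversary. -/
noncomputable def numFaults (A : Adversary n) : ℕ := {j | A.Faulty j}.ncard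

/-- A process is active at time `m` if it has not crashed before time `m`. -/
def Active (A : Adversary n) (j : Fin n) (m : ℕ) : Prop := ((m : ℕ) : ℕ∞) < A.crash j

end Adversary

/-- `Seen A ⟨j,ℓ⟩ ⟨i,m⟩`: node `⟨j,ℓ⟩` is in the view (communication graph) of node
`⟨i,m⟩`, i.e. there is a message chain from `⟨j,ℓ⟩` to `⟨i,m⟩`. -/
inductive Seen {n : ℕ} (A : Adversary n) : Fin n × ℕ → Fin n × ℕ → Prop
  | refl (p : Fin n × ℕ) : Seen A p p
  | self {p : Fin n × ℕ} {i : Fin n} {m : ℕ} : Seen A p (i, m) → Seen A p (i, m + 1)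
  | step {p : Fin n × ℕ} {j i : Fin n} {m : ℕ} : Seen A p (j, m) → A.F m j i →
      Seen A p (i, m + 1)

open Adversary

/-- Two adversaries give process `i` the same view at time `m` in a full-information
protocol: the same nodes are seen, with the same initial values at seen time-0 nodes
and the same incoming edges at seen later nodes. -/
def sameView {n : ℕ} (A B : Adversary n) (i : Fin n) (m : ℕ) : Prop :=
  (∀ p, Seen A p (i, m) ↔ Seen B p (i, m)) ∧
  (∀ j, Seen A (j, 0) (i, m) → A.init j = B.init j) ∧
  (∀ (k : ℕ) (j j' : Fin n), Seen A (j', k + 1) (i, m) → (A.F k j j' ↔ B.F k j j'))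

/-- The local state of (active) process `i` at time `m` is the same under both
adversaries: `i` is active in both and has the same full-information view. -/
def sameLocal {n : ℕ} (A B : Adversary n) (i : Fin n) (m : ℕ) : Prop :=
  A.Active i m ∧ B.Active i m ∧ sameView A B i m

/-- The runs of the system are those generated by adversaries with at most `t` crashes. -/
def Valid {n : ℕ} (t : ℕ) (A : Adversary n) : Prop := A.numFaults ≤ t

/-- Knowledge in the full-information protocol: `i` knows the fact `φ` at time `m`
iff `φ` holds at time `m` in every run (with at most `t` failures) in which `i` has
the same local state. -/
def Knows {n : ℕ} (t : ℕ) (φ : Adversary n → ℕ → Prop) (A : Adversary n) (i : Fin n)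
    (m : ℕ) : Prop :=
  ∀ B : Adversary n, Valid t B → sameLocal A B i m → φ B m

/-- The fact `∃v`: some process has initial value `v`. -/
def existsVal {n : ℕ} (v : Bool) : Adversary n → ℕ → Prop := fun A _ => ∃ j, A.init j = v

/-- Node `⟨j',m'⟩` is revealed to `⟨i,m⟩`: either it is seen by `⟨i,m⟩`, or for some
seen node `⟨i',m'⟩` the edge `(⟨j',m'-1⟩,⟨i',m'⟩)` is absent from `i`'s view
(proving that `j'` crashed before time `m'`). -/
def RevealedNode {n : ℕ} (A : Adversary n) (j' : Fin n) (m' : ℕ) (i : Fin n) (m : ℕ) :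
    Prop :=
  Seen A (j', m') (i, m) ∨
  ∃ (i' : Fin n) (k : ℕ), m' = k + 1 ∧ Seen A (i', k + 1) (i, m) ∧ ¬ A.F k j' i'

/-- Time `k` is revealed to `⟨i,m⟩` if every node `⟨j',k⟩` is revealed to `⟨i,m⟩`. -/
def RevealedTime {n : ℕ} (A : Adversary n) (k : ℕ) (i : Fin n) (m : ℕ) : Prop :=
  ∀ j', RevealedNode A j' k i m

/-- A hidden path w.r.t. `⟨i,m⟩`: for each `k ≤ m` a node `⟨j_k,k⟩` not revealed to `⟨i,m⟩`. -/
def HiddenPath {n : ℕ} (A : Adversary n) (i : Fin n) (m : ℕ) : Prop :=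
  ∃ js : ℕ → Fin n, ∀ k ≤ m, ¬ RevealedNode A (js k) k i m

/-- `not-known(∃0)`: no process active at time `m` knows `∃0`. -/
def notKnown0 {n : ℕ} (t : ℕ) : Adversary n → ℕ → Prop :=
  fun A m => ∀ j, A.Active j m → ¬ Knows t (existsVal false) A j m

/-- A (full-information, deterministic) decision protocol, described by the decision
status function: `P A i m = some v` iff by time `m` process `i` has decided `v`
in the run determined by adversary `A`. -/
abbrev ProtoDec (n : ℕ) : Type := Adversary n → Fin n → ℕ → Option Bool

/-- Sanity conditions making a decision-status function a protocol: decisions are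
irrevocable, and (for active processes) depend only on the local state. -/
def IsProtocol {n : ℕ} (t : ℕ) (P : ProtoDec n) : Prop :=
  (∀ A i m v, P A i m = some v → P A i (m + 1) = some v) ∧
  (∀ A B i m, Valid t A → Valid t B → sameLocal A B i m → P A i m = P B i m)

/-- Process `i` performs the action `decide(v)` at time `m`: it is decided on `v`
at `m` and was undecided before. -/
def DecidesAt {n : ℕ} (P : ProtoDec n) (A : Adversary n) (i : Fin n) (m : ℕ) (v : Bool) :
    Prop :=
  P A i m = some v ∧ ∀ k < m, P A i k = none

/-- Decision: every correct process eventually decides. -/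
def Decision {n : ℕ} (t : ℕ) (P : ProtoDec n) : Prop :=
  ∀ A : Adversary n, Valid t A → ∀ i, ¬ A.Faulty i → ∃ m, P A i m ≠ none

/-- Validity: if all initial values are `v` then correct processes decide `v`. -/
def Validity {n : ℕ} (t : ℕ) (P : ProtoDec n) : Prop :=
  ∀ A : Adversary n, Valid t A → ∀ v : Bool, (∀ j, A.init j = v) →
    ∀ i m w, ¬ A.Faulty i → P A i m = some w → w = v

/-- Agreement: all correct processes decide on the same value. -/
def Agreement {n : ℕ} (t : ℕ) (P : ProtoDec n) : Prop :=
  ∀ A : Adversary n, Valid t A → ∀ i j m m' v w, ¬ A.Faulty i → ¬ A.Faulty j →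
    P A i m = some v → P A j m' = some w → v = w

def ConsensusSolves {n : ℕ} (t : ℕ) (P : ProtoDec n) : Prop :=
  Decision t P ∧ Validity t P ∧ Agreement t P

/-- Uniform Agreement: all processes that decide (faulty or not) decide the same value. -/
def UniformAgreement {n : ℕ} (t : ℕ) (P : ProtoDec n) : Prop :=
  ∀ A : Adversary n, Valid t A → ∀ i j m m' v w,
    P A i m = some v → P A j m' = some w → v = w

def UniformConsensusSolves {n : ℕ} (t : ℕ) (P : ProtoDec n) : Prop :=
  Decision t P ∧ Validity t P ∧ UniformAgreement t P

/-- `Q` dominates `P`: for every adversary and process, if `i` has decided by time `m`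
in `P` then `i` has decided by time `m` in `Q`. -/
def Dominates {n : ℕ} (t : ℕ) (Q P : ProtoDec n) : Prop :=
  ∀ A : Adversary n, Valid t A → ∀ i m, P A i m ≠ none → Q A i m ≠ none

def StrictlyDominates {n : ℕ} (t : ℕ) (Q P : ProtoDec n) : Prop :=
  Dominates t Q P ∧ ¬ Dominates t P Q

/-- Turn a per-time decision rule into a decision-status function (the first decision
taken is kept forever). -/
def runDec (step : ℕ → Option Bool) : ℕ → Option Bool
  | 0 => step 0
  | m + 1 => (runDec step m).elim (step (m + 1)) some

/-- The protocol `P₀`: decide 0 as soon as `K_i ∃0` holds, otherwise decide 1 at time `t+1`. -/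
noncomputable def P0 (n t : ℕ) : ProtoDec n := fun A i =>
  runDec fun m =>
    if Knows t (existsVal false) A i m then some false
    else if m = t + 1 then some true
    else none

/-- The unbeatable protocol `Opt₀`: decide 0 as soon as `K_i ∃0` holds, and decide 1
as soon as `K_i not-known(∃0)` holds. -/
noncomputable def Opt0 (n t : ℕ) : ProtoDec n := fun A i =>
  runDec fun m =>
    if Knows t (existsVal false) A i m then some false
    else if Knows t (notKnown0 t) A i m then some true
    else none

/-- The number of processes with initial value `false` (0). -/
noncomputable def zeros {n : ℕ} (A : Adversary n) : ℕ :=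
  (Finset.univ.filter fun j => A.init j = false).card

/-- The number of processes with initial value `true` (1). -/
noncomputable def ones {n : ℕ} (A : Adversary n) : ℕ :=
  (Finset.univ.filter fun j => A.init j = true).card

/-- The fact `Maj = 0`: at least `n/2` initial values are 0. -/
def Maj0 (n : ℕ) : Adversary n → ℕ → Prop := fun A _ => n ≤ 2 * zeros A

/-- The fact `Maj = 1`: strictly more than `n/2` initial values are 1. -/
def Maj1 (n : ℕ) : Adversary n → ℕ → Prop := fun A _ => n < 2 * ones A

noncomputable def seenZeros {n : ℕ} (A : Adversary n) (i : Fin n) (m : ℕ) : ℕ :=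
  (Finset.univ.filter fun j => Seen A (j, 0) (i, m) ∧ A.init j = false).card

noncomputable def seenOnes {n : ℕ} (A : Adversary n) (i : Fin n) (m : ℕ) : ℕ :=
  (Finset.univ.filter fun j => Seen A (j, 0) (i, m) ∧ A.init j = true).card

/-- `Maj(vals(i,m))`: 0 if at least half of the initial values known to `i` at `m`
are 0, and 1 otherwise. -/
noncomputable def MajSeen {n : ℕ} (A : Adversary n) (i : Fin n) (m : ℕ) : Bool :=
  if seenOnes A i m ≤ seenZeros A i m then false else true

/-- The unbeatable majority consensus protocol `Opt_Maj`. -/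
noncomputable def OptMaj (n t : ℕ) : ProtoDec n := fun A i =>
  runDec fun m =>
    if Knows t (Maj0 n) A i m then some false
    else if Knows t (Maj1 n) A i m then some true
    else if ∃ k ≤ m, RevealedTime A k i m then some (MajSeen A i m)
    else none

/-- The fact `∀1`: all initial values are 1. -/
def all1 (n : ℕ) : Adversary n → ℕ → Prop := fun A _ => ∀ j, A.init j = true

/-- The sender set of `i` repeats at `⟨i,m⟩`: `i` hears from the same set of processes
in rounds `m-1` and `m` (only meaningful for `m ≥ 2`). -/
def senderSetRepeats {n : ℕ} (A : Adversary n) (i : Fin n) (m : ℕ) : Prop :=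
  ∀ j, (A.F (m - 2) j i ↔ A.F (m - 1) j i)

/-- The protocol `P0_opt` of Halpern, Moses and Waarts. -/
noncomputable def P0opt (n t : ℕ) : ProtoDec n := fun A i =>
  runDec fun m =>
    if Knows t (existsVal false) A i m then some false
    else if Knows t (all1 n) A i m ∨ (2 ≤ m ∧ senderSetRepeats A i m) then some true
    else none

/-- The fact `∃correct(v)`: some correct (never-failing) process knows `∃v`. -/
def ExistsCorrectKnows {n : ℕ} (t : ℕ) (v : Bool) : Adversary n → ℕ → Prop :=
  fun A m => ∃ j, ¬ A.Faulty j ∧ Knows t (existsVal v) A j m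

/-- The number `d` of failures process `i` knows of at time `m`: the number of
processes `j ≠ i` from which `i` receives no message in round `m`. -/
noncomputable def knownFaults {n : ℕ} (A : Adversary n) (i : Fin n) : ℕ → ℕ
  | 0 => 0
  | m + 1 => (Finset.univ.filter fun j => j ≠ i ∧ ¬ A.F m j i).card

/-- The protocol `u-P₀` for uniform consensus: decide 0 as soon as
`K_i ∃correct(0)` holds, otherwise decide 1 at time `t+1`. -/
noncomputable def uP0 (n t : ℕ) : ProtoDec n := fun A i =>
  runDec fun m =>
    if Knows t (ExistsCorrectKnows t false) A i m then some false
    else if m = t + 1 then some true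
    else none

/-- The unbeatable uniform consensus protocol `u-Opt₀`. -/
noncomputable def uOpt0 (n t : ℕ) : ProtoDec n := fun A i =>
  runDec fun m =>
    if Knows t (ExistsCorrectKnows t false) A i m then some false
    else if ¬ Knows t (existsVal false) A i m ∧ ∃ k ≤ m, RevealedTime A k i m then
      some true
    else none

/-- All decisions in the run `P[A]` are taken at or before time `m`. -/
def AllDecidedBy {n : ℕ} (P : ProtoDec n) (A : Adversary n) (m : ℕ) : Prop :=
  ∀ i k, P A i k ≠ none → P A i m ≠ none

/-- `Q` last-decider dominates `P`. -/
def LDDominates {n : ℕ} (t : ℕ) (Q P : ProtoDec n) : Prop :=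
  ∀ A : Adversary n, Valid t A → ∀ m, AllDecidedBy P A m → AllDecidedBy Q A m

/-- A 0-chain for `⟨i,m⟩`: distinct processes `j₀,…,j_d = i` with `d ≤ m`, `j₀` having
initial value 0, and `j_k` receiving a message from `j_{k-1}` at time `k` (round `k`). -/
def ZeroChain {n : ℕ} (A : Adversary n) (i : Fin n) (m : ℕ) : Prop :=
  ∃ d ≤ m, ∃ js : ℕ → Fin n, js d = i ∧
    (∀ k ≤ d, ∀ l ≤ d, js k = js l → k = l) ∧
    A.init (js 0) = false ∧
    ∀ k, 1 ≤ k → k ≤ d → A.F (k - 1) (js (k - 1)) (js k)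

section KUhelpers

variable {n : ℕ}

private lemma seen_self_up {A : Adversary n} {p : Fin n × ℕ} {x : Fin n} {a b : ℕ}
    (h : Seen A p (x, a)) (hab : a ≤ b) : Seen A p (x, b) := by
  induction b, hab using Nat.le_induction with
  | base => exact h
  | succ b hb ih => exact Seen.self ih

private lemma seen_chain {A : Adversary n} {p q : Fin n × ℕ} (h : Seen A p q) (hp : p.2 = 0) :
    ∃ js : ℕ → Fin n, js 0 = p.1 ∧ js q.2 = q.1 ∧
      ∀ k < q.2, js (k + 1) = js k ∨ A.F k (js k) (js (k + 1)) := by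
  induction h with
  | refl =>
    exact ⟨fun _ => p.1, rfl, by rw [hp], fun k hk => by rw [hp] at hk; omega⟩
  | @self i m h ih =>
    obtain ⟨js, h0, hend, hch⟩ := ih
    refine ⟨fun k => if k ≤ m then js k else i, by simp [h0], by simp, ?_⟩
    intro k hk
    rcases Nat.lt_or_ge k m with hkm | hkm
    · have h1 : k ≤ m := by omega
      have h2 : k + 1 ≤ m := by omega
      simpa [h1, h2] using hch k hkm
    · have hk' : k = m := by omega
      subst hk'
      left
      simp [hend]
  | @step j i m h hF ih =>
    obtain ⟨js, h0, hend, hch⟩ := ih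
    refine ⟨fun k => if k ≤ m then js k else i, by simp [h0], by simp, ?_⟩
    intro k hk
    rcases Nat.lt_or_ge k m with hkm | hkm
    · have h1 : k ≤ m := by omega
      have h2 : k + 1 ≤ m := by omega
      simpa [h1, h2] using hch k hkm
    · have hk' : k = m := by omega
      subst hk'
      right
      simpa [hend] using hF

private lemma seen_of_chain {A : Adversary n} (js : ℕ → Fin n) (c : ℕ)
    (hch : ∀ k < c, js (k + 1) = js k ∨ A.F k (js k) (js (k + 1))) :
    Seen A (js 0, 0) (js c, c) := by
  induction c with
  | zero => exact Seen.refl _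
  | succ c ih =>
    have h := ih (fun k hk => hch k (by omega))
    rcases hch c (by omega) with he | hF
    · rw [he]; exact Seen.self h
    · exact Seen.step h hF

/-- Transfer lemma: a chain from `(j₀,0)` to `(i,t+1)` yields one to `(j,t+1)`. -/
private lemma seen_transfer {t : ℕ} {A : Adversary n} (hA : Valid t A) {j₀ i : Fin n}
    (hi : A.Active i (t + 1)) (h : Seen A (j₀, 0) (i, t + 1)) (j : Fin n) :
    Seen A (j₀, 0) (j, t + 1) := by
  obtain ⟨js, hjs0, hjsend, hch⟩ := seen_chain h rfl
  have hsk : ∀ k, k ≤ t + 1 → Seen A (j₀, 0) (js k, k) := by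
    intro k hk
    have := seen_of_chain js k (fun l hl => hch l (by omega))
    rwa [hjs0] at this
  have crash_ge : ∀ (d : ℕ) (q q' : Fin n), A.F d q q' →
      ((d + 1 : ℕ) : ℕ∞) ≤ A.crash q := by
    intro d q q' hF
    by_contra hlt
    exact A.after_crash d q q' (not_le.mp hlt) hF
  have H : ∀ (k : ℕ) (q : Fin n), k ≤ t → Seen A (j₀, 0) (q, k) →
      ((k + 1 : ℕ) : ℕ∞) < A.crash q → Seen A (j₀, 0) (j, t + 1) := by
    intro k q hk hseen hcr
    exact seen_self_up (Seen.step hseen (A.before_crash k q j hcr)) (by omega)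
  have M : ∀ (g c : ℕ), c + g = t + 1 → js c = i ∨
      ∃ d, c ≤ d ∧ d ≤ t ∧ js d = js c ∧ A.F d (js d) (js (d + 1)) := by
    intro g
    induction g with
    | zero =>
      intro c hc
      left
      have hc' : c = t + 1 := by omega
      rw [hc', hjsend]
    | succ g ih =>
      intro c hc
      rcases hch c (by omega) with hself | hF
      · rcases ih (c + 1) (by omega) with h1 | ⟨d, hd1, hd2, hd3, hd4⟩
        · left; rw [← hself]; exact h1
        · exact Or.inr ⟨d, by omega, hd2, hd3.trans hself, hd4⟩
      · exact Or.inr ⟨c, le_refl c, by omega, rfl, hF⟩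
  by_cases hdup : ∃ a b, a < b ∧ b ≤ t + 1 ∧ js a = js b
  · obtain ⟨a, b, hab, hb, heq⟩ := hdup
    have ha : a ≤ t := by omega
    rcases M (t + 1 - b) b (by omega) with hbi | ⟨d, hbd, hdt, hdeq, hdF⟩
    · -- js b = i, so js a = i which is active past t+1
      refine H a (js a) ha (hsk a (by omega)) ?_
      rw [heq, hbi]
      exact lt_of_le_of_lt (by exact_mod_cast Nat.cast_le.mpr (by omega : a + 1 ≤ t + 1)) hi
    · -- js d = js b = js a sends at time d ≥ b > a
      refine H a (js a) ha (hsk a (by omega)) ?_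
      have hle : ((d + 1 : ℕ) : ℕ∞) ≤ A.crash (js a) := by
        rw [heq, ← hdeq]; exact crash_ge d _ _ hdF
      exact lt_of_lt_of_le (by exact_mod_cast (by omega : a + 1 < d + 1)) hle
  · -- js is injective on [0, t+1]; pigeonhole gives a nonfaulty sender
    push_neg at hdup
    have hex : ∃ a, a ≤ t ∧ ¬ A.Faulty (js a) := by
      by_contra hall
      push_neg at hall
      have hcard : ((Finset.range (t + 1)).image js).card = t + 1 := by
        rw [Finset.card_image_of_injOn, Finset.card_range]
        intro a haa b hbb hab
        simp only [Finset.coe_range, Set.mem_Iio] at haa hbb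
        rcases lt_trichotomy a b with hlt | heq | hgt
        · exact absurd hab (hdup a b hlt (by omega))
        · exact heq
        · exact absurd hab.symm (hdup b a hgt (by omega))
      have hsub : ↑((Finset.range (t + 1)).image js) ⊆ {x | A.Faulty x} := by
        intro x hx
        simp only [Finset.coe_image, Finset.coe_range, Set.mem_image, Set.mem_Iio] at hx
        obtain ⟨a, ha, rfl⟩ := hx
        exact hall a (by omega)
      have hle := Set.ncard_le_ncard hsub (Set.toFinite _)
      rw [Set.ncard_coe_finset, hcard] at hle
      have : A.numFaults ≤ t := hA
      exact absurd (hle.trans this) (by omega)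
    obtain ⟨a, ha, hnf⟩ := hex
    have hcr : A.crash (js a) = ⊤ := not_not.mp hnf
    refine H a (js a) ha (hsk a (by omega)) ?_
    rw [hcr]
    exact_mod_cast lt_top_iff_ne_top.mpr (ENat.coe_ne_top (a + 1))

private lemma seen_F_congr {A B : Adversary n} (hF : A.F = B.F) {p q : Fin n × ℕ}
    (h : Seen A p q) : Seen B p q := by
  induction h with
  | refl => exact Seen.refl _
  | self _ ih => exact Seen.self ih
  | step _ hF' ih => exact Seen.step ih (hF ▸ hF')

private lemma knows_of_witness {t : ℕ} {A : Adversary n} {v : Bool} {i : Fin n} {m : ℕ}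
    (h : ∃ j₀, A.init j₀ = v ∧ Seen A (j₀, 0) (i, m)) :
    Knows t (existsVal v) A i m := by
  obtain ⟨j₀, hv, hseen⟩ := h
  intro B hVB hloc
  obtain ⟨_, _, _, hinit, _⟩ := hloc
  exact ⟨j₀, by rw [← hinit j₀ hseen]; exact hv⟩

private lemma knows_to_witness {t : ℕ} {A : Adversary n} (hA : Valid t A) {v : Bool}
    {i : Fin n} {m : ℕ} (hi : A.Active i m) (hK : Knows t (existsVal v) A i m) :
    ∃ j₀, A.init j₀ = v ∧ Seen A (j₀, 0) (i, m) := by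
  by_contra hno
  push_neg at hno
  let B : Adversary n :=
    { init := fun _ => !v, F := A.F, crash := A.crash, crash_pos := A.crash_pos,
      before_crash := A.before_crash, after_crash := A.after_crash }
  have hFB : A.F = B.F := rfl
  have hVB : Valid t B := hA
  have hloc : sameLocal A B i m := by
    refine ⟨hi, hi, fun p => ⟨fun h => seen_F_congr hFB h, fun h => seen_F_congr hFB.symm h⟩,
      ?_, fun k j j' _ => Iff.rfl⟩
    intro j hseen
    have hne : A.init j ≠ v := fun h => hno j h hseen
    show A.init j = !v
    revert hne
    cases v <;> cases h : A.init j <;> simp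
  obtain ⟨j, hj⟩ := hK B hVB hloc
  have hj' : (!v) = v := hj
  simp at hj'

end KUhelpers

/-- At time `t+1`, knowledge of `∃v` is the same for all (active) processes. -/
theorem knowledge_uniform_at_t_plus_one (n t : ℕ) (ht : t < n)
    (A : Adversary n) (hA : Valid t A) (v : Bool) (i j : Fin n)
    (hi : A.Active i (t + 1)) (hj : A.Active j (t + 1)) :
    Knows t (existsVal v) A i (t + 1) ↔ Knows t (existsVal v) A j (t + 1) := by
  constructor
  · intro hK
    obtain ⟨j₀, hv, hseen⟩ := knows_to_witness hA hi hK
    exact knows_of_witness ⟨j₀, hv, seen_transfer hA hi hseen j⟩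
  · intro hK
    obtain ⟨j₀, hv, hseen⟩ := knows_to_witness hA hj hK
    exact knows_of_witness ⟨j₀, hv, seen_transfer hA hj hseen i⟩
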